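/- Let 𝒜 be a linear map on ℝ^{M×W} with operator norm ‖𝒜‖ ≤ √(W/Ω) (w.r.t. Frobenius norm on the domain and ℓ₂ norm on the range), and suppose ‖P_T 𝒜*𝒜 P_T − P_T‖ ≤ 1/2. Then for every Z ∈ ker(𝒜), ‖P_{T⊥}(Z)‖_F ≥ √(Ω/(2W))·‖P_T(Z)‖_F. -/

import Mathlib

open MeasureTheory ContinuousLinearMap

/-- If `𝒜` has operator norm at most `√(W/Ω)` and
`‖P_T 𝒜* 𝒜 P_T − P_T‖ ≤ 1/2` where `P_T` is an orthogonal projection, then for every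
`Z ∈ ker 𝒜`, `‖P_{T⊥}(Z)‖_F ≥ √(Ω/(2W)) ‖P_T(Z)‖_F`
(with `ℝ^{M×W}` identified with Euclidean space carrying the Frobenius norm). -/
theorem stmt_16 (M W Ω L : ℕ) (hW : 0 < W) (hΩ : 0 < Ω)
    (𝒜 : EuclideanSpace ℝ (Fin M × Fin W) →L[ℝ] EuclideanSpace ℝ (Fin L))
    (P : EuclideanSpace ℝ (Fin M × Fin W) →L[ℝ] EuclideanSpace ℝ (Fin M × Fin W))
    (hPidem : P.comp P = P)
    (hPsa : ContinuousLinearMap.adjoint P = P)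
    (hAnorm : ‖𝒜‖ ≤ Real.sqrt ((W : ℝ) / Ω))
    (hinj : ‖(P.comp ((ContinuousLinearMap.adjoint 𝒜).comp (𝒜.comp P))) - P‖ ≤ 1 / 2) :
    ∀ Z : EuclideanSpace ℝ (Fin M × Fin W), 𝒜 Z = 0 →
      Real.sqrt ((Ω : ℝ) / (2 * W)) * ‖P Z‖ ≤ ‖Z - P Z‖ := by
  intro Z hZ
  set x := P Z with hx
  have hPx : P x = x := by
    rw [hx, ← ContinuousLinearMap.comp_apply, hPidem]
  set T := (P.comp ((ContinuousLinearMap.adjoint 𝒜).comp (𝒜.comp P))) - P with hT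
  -- inner product identity
  have hinner : (inner ℝ x (T x) : ℝ) = ‖𝒜 x‖ ^ 2 - ‖x‖ ^ 2 := by
    have h1 : (inner ℝ x (T x) : ℝ) = (inner ℝ x (P ((ContinuousLinearMap.adjoint 𝒜) (𝒜 (P x)))) : ℝ)
        - (inner ℝ x (P x) : ℝ) := by
      simp [hT, ContinuousLinearMap.sub_apply, ContinuousLinearMap.comp_apply,
        inner_sub_right]
    have h2 : (inner ℝ x (P ((ContinuousLinearMap.adjoint 𝒜) (𝒜 (P x)))) : ℝ)
        = ‖𝒜 x‖ ^ 2 := by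
      rw [hPx]
      conv_lhs => rw [← hPsa]
      rw [ContinuousLinearMap.adjoint_inner_right, hPx,
        ContinuousLinearMap.adjoint_inner_right, real_inner_self_eq_norm_sq]
    have h3 : (inner ℝ x (P x) : ℝ) = ‖x‖ ^ 2 := by
      rw [hPx, real_inner_self_eq_norm_sq]
    rw [h1, h2, h3]
  -- lower bound on ‖𝒜 x‖²
  have hlow : (1 / 2) * ‖x‖ ^ 2 ≤ ‖𝒜 x‖ ^ 2 := by
    have habs : |inner ℝ x (T x)| ≤ (1 / 2) * ‖x‖ ^ 2 := by
      calc |(inner ℝ x (T x) : ℝ)| ≤ ‖x‖ * ‖T x‖ := abs_real_inner_le_norm _ _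
        _ ≤ ‖x‖ * (‖T‖ * ‖x‖) := by
            gcongr; exact T.le_opNorm x
        _ ≤ ‖x‖ * ((1 / 2) * ‖x‖) := by gcongr
        _ = (1 / 2) * ‖x‖ ^ 2 := by ring
    have := (abs_le.mp habs).1
    rw [hinner] at this
    linarith
  -- upper bound
  have hAx : 𝒜 x = 𝒜 (x - Z) := by
    rw [map_sub, hZ, sub_zero]
  have hup : ‖𝒜 x‖ ≤ Real.sqrt ((W : ℝ) / Ω) * ‖Z - x‖ := by
    calc ‖𝒜 x‖ = ‖𝒜 (x - Z)‖ := by rw [hAx]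
      _ ≤ ‖𝒜‖ * ‖x - Z‖ := 𝒜.le_opNorm _
      _ ≤ Real.sqrt ((W : ℝ) / Ω) * ‖x - Z‖ := by gcongr
      _ = Real.sqrt ((W : ℝ) / Ω) * ‖Z - x‖ := by rw [norm_sub_rev]
  have hWΩ : (0 : ℝ) < (W : ℝ) / Ω := by positivity
  have hup2 : ‖𝒜 x‖ ^ 2 ≤ ((W : ℝ) / Ω) * ‖Z - x‖ ^ 2 := by
    have h := pow_le_pow_left₀ (norm_nonneg _) hup 2
    rw [mul_pow, Real.sq_sqrt hWΩ.le] at h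
    exact h
  -- combine
  have key : ((Ω : ℝ) / (2 * W)) * ‖x‖ ^ 2 ≤ ‖Z - x‖ ^ 2 := by
    have hΩ' : (0 : ℝ) < Ω := by exact_mod_cast hΩ
    have hW' : (0 : ℝ) < W := by exact_mod_cast hW
    have h5 : (1 / 2) * ‖x‖ ^ 2 ≤ ((W : ℝ) / Ω) * ‖Z - x‖ ^ 2 := le_trans hlow hup2
    rw [div_mul_eq_mul_div, div_le_iff₀ (by positivity : (0:ℝ) < 2 * W)]
    field_simp at h5
    linarith
  calc Real.sqrt ((Ω : ℝ) / (2 * W)) * ‖x‖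
      = Real.sqrt (((Ω : ℝ) / (2 * W)) * ‖x‖ ^ 2) := by
        rw [Real.sqrt_mul (by positivity), Real.sqrt_sq (norm_nonneg _)]
    _ ≤ Real.sqrt (‖Z - x‖ ^ 2) := Real.sqrt_le_sqrt key
    _ = ‖Z - x‖ := Real.sqrt_sq (norm_nonneg _)
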